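/- Let F be a field of characteristic zero with a derivation δ, let K be a subfield of F closed under δ, and let η ∈ F be nonzero with F = K(η) and δη = p·η for some p ∈ K. Then for every c ∈ K the following are equivalent: (i) there exists f ∈ F with δf = c·η; (ii) there exists h ∈ K with c = δh + p·h. -/

import Mathlib

namespace RLaux

open Polynomial HahnSeries

section Basic

variable {F : Type*} [Field F] {δ : F → F}

theorem dzero (hadd : ∀ a b : F, δ (a + b) = δ a + δ b) : δ 0 = 0 := by
  have := hadd 0 0; simp at this; linear_combination this

theorem done' (hmul : ∀ a b : F, δ (a * b) = a * δ b + δ a * b) : δ 1 = 0 := by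
  have := hmul 1 1; simp at this; linear_combination this

theorem dneg (hadd : ∀ a b : F, δ (a + b) = δ a + δ b) (a : F) : δ (-a) = -δ a := by
  have := hadd a (-a); simp [dzero hadd] at this; linear_combination -this

theorem dsum (hadd : ∀ a b : F, δ (a + b) = δ a + δ b) {ι : Type*} (s : Finset ι) (f : ι → F) :
    δ (∑ i ∈ s, f i) = ∑ i ∈ s, δ (f i) :=
  map_sum (AddMonoidHom.mk' δ hadd) f s

theorem dpow (hmul : ∀ a b : F, δ (a * b) = a * δ b + δ a * b)
    {η pf : F} (hδη : δ η = pf * η) (n : ℕ) : δ (η ^ n) = n • pf * η ^ n := by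
  induction n with
  | zero => simpa using done' hmul
  | succ n ih =>
    have : δ (η ^ n * η) = η ^ n * δ η + δ (η ^ n) * η := hmul _ _
    rw [← pow_succ, hδη, ih] at this
    rw [this, succ_nsmul]
    ring

theorem dinv (hmul : ∀ a b : F, δ (a * b) = a * δ b + δ a * b) {x : F} (hx : x ≠ 0) :
    δ x⁻¹ = -(δ x * x⁻¹ * x⁻¹) := by
  have h1 : δ (x * x⁻¹) = x * δ x⁻¹ + δ x * x⁻¹ := hmul _ _
  rw [mul_inv_cancel₀ hx, done' hmul] at h1
  have h2 : x * δ x⁻¹ = -(δ x * x⁻¹) := by linear_combination -h1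
  calc δ x⁻¹ = x⁻¹ * (x * δ x⁻¹) := by rw [← mul_assoc, inv_mul_cancel₀ hx, one_mul]
    _ = x⁻¹ * -(δ x * x⁻¹) := by rw [h2]
    _ = -(δ x * x⁻¹ * x⁻¹) := by ring

end Basic

section Laurent

variable {k : Type*} [Field k]

/-- Coefficientwise "derivation" on Laurent series. -/
def DL (d : k → k) (hd0 : d 0 = 0) (p : k) (s : LaurentSeries k) : LaurentSeries k :=
  { coeff := fun n => d (s.coeff n) + n • p * s.coeff n
    isPWO_support' := s.isPWO_support.mono (by
      intro n hn
      rw [HahnSeries.mem_support]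
      intro h0
      apply hn
      show d (s.coeff n) + n • p * s.coeff n = 0
      rw [h0, hd0, mul_zero, add_zero]) }

variable {d : k → k} {hd0 : d 0 = 0} {p : k}

@[simp] theorem DL_coeff (s : LaurentSeries k) (n : ℤ) :
    (DL d hd0 p s).coeff n = d (s.coeff n) + n • p * s.coeff n := rfl

theorem DL_single (a : ℤ) (r : k) :
    DL d hd0 p (single a r) = single a (d r + a • p * r) := by
  ext n
  by_cases h : n = a
  · subst h; simp [coeff_single_same]
  · simp [coeff_single_of_ne h, hd0]

theorem DL_add (hdadd : ∀ a b : k, d (a + b) = d a + d b) (s t : LaurentSeries k) :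
    DL d hd0 p (s + t) = DL d hd0 p s + DL d hd0 p t := by
  ext n
  simp [hdadd]
  ring

theorem DL_zero : DL d hd0 p 0 = 0 := by
  ext n; simp [hd0]

theorem DL_one (hd1 : d 1 = 0) : DL d hd0 p 1 = 0 := by
  rw [← HahnSeries.single_zero_one, DL_single]
  simp [hd1]

theorem DL_neg (hdadd : ∀ a b : k, d (a + b) = d a + d b) (s : LaurentSeries k) :
    DL d hd0 p (-s) = -DL d hd0 p s := by
  have h := DL_add (hd0 := hd0) (p := p) hdadd s (-s)
  rw [add_neg_cancel, DL_zero] at h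
  linear_combination -h

theorem DL_support (s : LaurentSeries k) : (DL d hd0 p s).support ⊆ s.support := by
  intro n hn
  rw [HahnSeries.mem_support] at hn ⊢
  intro h0
  apply hn
  rw [DL_coeff, h0, hd0, mul_zero, add_zero]

theorem DL_mul (hdadd : ∀ a b : k, d (a + b) = d a + d b)
    (hdmul : ∀ a b : k, d (a * b) = a * d b + d a * b)
    (s t : LaurentSeries k) :
    DL d hd0 p (s * t) = s * DL d hd0 p t + DL d hd0 p s * t := by
  ext n
  rw [HahnSeries.coeff_add, DL_coeff,
    HahnSeries.coeff_mul_right' t.isPWO_support (DL_support t),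
    HahnSeries.coeff_mul_left' s.isPWO_support (DL_support s),
    HahnSeries.coeff_mul]
  rw [dsum hdadd, Finset.mul_sum, ← Finset.sum_add_distrib, ← Finset.sum_add_distrib]
  apply Finset.sum_congr rfl
  rintro ⟨i, j⟩ hij
  rw [Finset.mem_addAntidiagonal] at hij
  obtain ⟨-, -, hij⟩ := hij
  simp only [DL_coeff, hdmul]
  subst hij
  rw [add_smul]
  ring

theorem DL_inv (hdadd : ∀ a b : k, d (a + b) = d a + d b)
    (hdmul : ∀ a b : k, d (a * b) = a * d b + d a * b) (hd1 : d 1 = 0)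
    {s : LaurentSeries k} (hs : s ≠ 0) :
    DL d hd0 p s⁻¹ = -(DL d hd0 p s * s⁻¹ * s⁻¹) := by
  have h1 := DL_mul (hd0 := hd0) (p := p) hdadd hdmul s s⁻¹
  rw [mul_inv_cancel₀ hs, DL_one hd1] at h1
  have h2 : s * DL d hd0 p s⁻¹ = -(DL d hd0 p s * s⁻¹) := by linear_combination -h1
  calc DL d hd0 p s⁻¹ = s⁻¹ * (s * DL d hd0 p s⁻¹) := by
        rw [← mul_assoc, inv_mul_cancel₀ hs, one_mul]
    _ = s⁻¹ * -(DL d hd0 p s * s⁻¹) := by rw [h2]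
    _ = -(DL d hd0 p s * s⁻¹ * s⁻¹) := by ring

end Laurent

section Poly

variable {k : Type*} [Field k]

/-- The polynomial with coefficients `d qᵢ + (i+1)·p·qᵢ`. -/
noncomputable def Dp (d : k → k) (p : k) (q : Polynomial k) : Polynomial k :=
  ∑ i ∈ q.support, Polynomial.C (d (q.coeff i) + (i • p + p) * q.coeff i) * X ^ i

theorem Dp_coeff {d : k → k} (hd0 : d 0 = 0) (p : k) (q : Polynomial k) (n : ℕ) :
    (Dp d p q).coeff n = d (q.coeff n) + (n • p + p) * q.coeff n := by
  rw [Dp, finset_sum_coeff]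
  simp only [coeff_C_mul, coeff_X_pow, mul_ite, mul_one, mul_zero]
  rw [Finset.sum_ite_eq q.support n (fun i => d (q.coeff i) + (i • p + p) * q.coeff i)]
  by_cases h : n ∈ q.support
  · simp [h]
  · rw [Polynomial.notMem_support_iff] at h
    simp [h, hd0, Polynomial.notMem_support_iff.mpr h]

theorem Dp_degree_le (d : k → k) (p : k) (q : Polynomial k) :
    (Dp d p q).degree ≤ q.degree := by
  refine (Polynomial.degree_sum_le _ _).trans ?_
  rw [Finset.sup_le_iff]
  intro i hi
  refine (Polynomial.degree_C_mul_X_pow_le _ _).trans ?_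
  exact Polynomial.le_degree_of_ne_zero (Polynomial.mem_support_iff.mp hi)

theorem aeval_Dp {F : Type*} [Field F] {δ : F → F}
    (hadd : ∀ a b : F, δ (a + b) = δ a + δ b)
    (hmul : ∀ a b : F, δ (a * b) = a * δ b + δ a * b)
    {K : Subfield F} {d : K → K} (hd : ∀ a : K, ((d a : K) : F) = δ (a : F))
    {η : F} {p₀ : K} (hδη : δ η = ↑p₀ * η) (q : Polynomial K) :
    (aeval η (Dp d p₀ q) : F) = δ (aeval η q) + ↑p₀ * aeval η q := by
  have hq : (aeval η q : F) = ∑ i ∈ q.support, (↑(q.coeff i) : F) * η ^ i := by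
    rw [aeval_def, eval₂_eq_sum, Polynomial.sum_def]
    rfl
  have hDq : (aeval η (Dp d p₀ q) : F)
      = ∑ i ∈ q.support, (↑(d (q.coeff i) + (i • p₀ + p₀) * q.coeff i) : F) * η ^ i := by
    rw [Dp, map_sum (aeval η) (fun i => Polynomial.C (d (q.coeff i) + (i • p₀ + p₀) * q.coeff i) * X ^ i)
      q.support]
    refine Finset.sum_congr rfl fun i _ => ?_
    rw [map_mul, map_pow, aeval_X, aeval_C]
    rfl
  rw [hq, hDq, dsum hadd, Finset.mul_sum, ← Finset.sum_add_distrib]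
  refine Finset.sum_congr rfl fun i _ => ?_
  rw [hmul, dpow hmul hδη]
  push_cast
  rw [hd]
  ring

end Poly

end RLaux

set_option maxHeartbeats 1000000 in
/-- **Single-derivation core of the Reduction Lemma** (Lemma 3.1 of the paper).
Let `F` be a field of characteristic zero with a derivation `δ`, `K` a subfield closed
under `δ`, and `η ≠ 0` with `F = K(η)` and `δη = p·η` for some `p ∈ K`.  Then for every
`c ∈ K`:  `(∃ f ∈ F, δf = c·η) ↔ (∃ h ∈ K, c = δh + p·h)`. -/
theorem reduction_lemma_single_derivation
    (F : Type*) [Field F] [CharZero F]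
    (δ : F → F)
    (hadd : ∀ a b : F, δ (a + b) = δ a + δ b)
    (hmul : ∀ a b : F, δ (a * b) = a * δ b + δ a * b)
    (K : Subfield F)
    (hKδ : ∀ a ∈ K, δ a ∈ K)
    (η : F) (hη : η ≠ 0)
    (hgen : Subfield.closure (insert η (K : Set F)) = ⊤)
    (p : F) (hp : p ∈ K) (hδη : δ η = p * η)
    (c : F) (hc : c ∈ K) :
    (∃ f : F, δ f = c * η) ↔ (∃ h ∈ K, c = δ h + p * h) := by
  constructor
  · rintro ⟨f, hf⟩
    -- the derivation restricted to `K`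
    set d : K → K := fun a => ⟨δ a, hKδ a a.2⟩ with hd_def
    have hd : ∀ a : K, ((d a : K) : F) = δ (a : F) := fun a => rfl
    have hd0 : d 0 = 0 := Subtype.ext (by
      show δ ((0 : K) : F) = ((0 : K) : F)
      rw [ZeroMemClass.coe_zero, RLaux.dzero hadd])
    have hd1 : d 1 = 0 := Subtype.ext (by
      show δ ((1 : K) : F) = ((0 : K) : F)
      rw [OneMemClass.coe_one, ZeroMemClass.coe_zero, RLaux.done' hmul])
    have hdadd : ∀ a b : K, d (a + b) = d a + d b := by
      intro a b
      apply Subtype.ext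
      show δ ((a + b : K) : F) = ((d a + d b : K) : F)
      push_cast
      rw [hadd]
    have hdmul : ∀ a b : K, d (a * b) = a * d b + d a * b := by
      intro a b
      apply Subtype.ext
      show δ ((a * b : K) : F) = ((a * d b + d a * b : K) : F)
      push_cast
      rw [hmul]
    set p₀ : K := ⟨p, hp⟩ with hp₀_def
    set c₀ : K := ⟨c, hc⟩ with hc₀_def
    -- the quotient g = f/η satisfies δg + p·g = c
    have hfg : f = f * η⁻¹ * η := by field_simp
    have hg : δ (f * η⁻¹) + p * (f * η⁻¹) = c := by
      have h1 : δ (f * η⁻¹ * η) = f * η⁻¹ * δ η + δ (f * η⁻¹) * η := hmul _ _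
      rw [← hfg, hf, hδη] at h1
      exact mul_right_cancel₀ hη (show (δ (f * η⁻¹) + p * (f * η⁻¹)) * η = c * η by
        linear_combination -h1)
    -- it suffices to solve the equation inside K
    suffices hkey : ∃ h₀ : K, d h₀ + p₀ * h₀ = c₀ by
      obtain ⟨h₀, hh₀⟩ := hkey
      refine ⟨h₀, h₀.2, ?_⟩
      have h2 : ((d h₀ + p₀ * h₀ : K) : F) = ((c₀ : K) : F) := by rw [hh₀]
      push_cast at h2
      exact h2.symm
    by_cases halg : IsAlgebraic K η
    · -- algebraic case
      have hint : IsIntegral K η := halg.isIntegral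
      have hmem : f * η⁻¹ ∈ (Algebra.adjoin K {η} : Subalgebra K F) := by
        have hE : Subfield.closure (insert η (K : Set F))
            ≤ (IntermediateField.adjoin K {η}).toSubfield := by
          apply Subfield.closure_le.mpr
          intro x hx
          rcases hx with rfl | hx
          · exact IntermediateField.subset_adjoin K _ rfl
          · exact (IntermediateField.adjoin K {η}).algebraMap_mem ⟨x, hx⟩
        have hmemT : f * η⁻¹ ∈ Subfield.closure (insert η (K : Set F)) := by
          rw [hgen]; trivial
        have h2 : f * η⁻¹ ∈ IntermediateField.adjoin K {η} := hE hmemT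
        rw [← IntermediateField.adjoin_simple_toSubalgebra_of_isAlgebraic hint.isAlgebraic]
        exact h2
      rw [Algebra.adjoin_singleton_eq_range_aeval] at hmem
      obtain ⟨q0, hq0⟩ := hmem
      have hm : (minpoly K η).Monic := minpoly.monic hint
      set q : Polynomial K := q0 %ₘ minpoly K η with hq_def
      have haq : (Polynomial.aeval η q : F) = f * η⁻¹ := by
        rw [hq_def, Polynomial.modByMonic_eq_sub_mul_div q0 (minpoly K η), map_sub, map_mul,
          minpoly.aeval, zero_mul, sub_zero]
        exact hq0
      have hdeg : q.degree < (minpoly K η).degree := Polynomial.degree_modByMonic_lt q0 hm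
      have hc' : (Polynomial.aeval η (RLaux.Dp d p₀ q) : F) = c := by
        rw [RLaux.aeval_Dp hadd hmul hd hδη q, haq]
        exact hg
      have hzero : RLaux.Dp d p₀ q - Polynomial.C c₀ = 0 := by
        refine Polynomial.eq_zero_of_dvd_of_degree_lt (minpoly.dvd K η ?_) ?_
        · rw [map_sub, hc', Polynomial.aeval_C]
          exact sub_eq_zero_of_eq rfl
        · refine lt_of_le_of_lt (Polynomial.degree_sub_le _ _) (max_lt ?_ ?_)
          · exact lt_of_le_of_lt (RLaux.Dp_degree_le d p₀ q) hdeg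
          · exact lt_of_le_of_lt Polynomial.degree_C_le (minpoly.degree_pos hint)
      refine ⟨q.coeff 0, ?_⟩
      have h3 : (RLaux.Dp d p₀ q).coeff 0 = (Polynomial.C c₀).coeff 0 := by
        rw [sub_eq_zero] at hzero
        rw [hzero]
      rw [RLaux.Dp_coeff hd0, Polynomial.coeff_C_zero, zero_smul, zero_add] at h3
      exact h3
    · -- transcendental case
      have htr : Transcendental K η := halg
      have hinj : Function.Injective (Polynomial.aeval η : Polynomial K →ₐ[K] F) :=
        transcendental_iff_injective.mp htr
      set φ : RatFunc K →ₐ[K] F := RatFunc.liftAlgHom (Polynomial.aeval η)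
        (nonZeroDivisors_le_comap_nonZeroDivisors_of_injective _ hinj) with hφ_def
      have hφpoly : ∀ q : Polynomial K,
          φ (algebraMap (Polynomial K) (RatFunc K) q) = Polynomial.aeval η q := by
        intro q
        have h := RatFunc.liftAlgHom_apply_div (Polynomial.aeval η)
          (nonZeroDivisors_le_comap_nonZeroDivisors_of_injective _ hinj) q 1
        simpa using h
      have hφX : φ RatFunc.X = η := by
        rw [← RatFunc.algebraMap_X, hφpoly, Polynomial.aeval_X]
      have hφC : ∀ a : K, φ (RatFunc.C a) = (a : F) := by
        intro a
        rw [← RatFunc.algebraMap_C, hφpoly, Polynomial.aeval_C]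
        rfl
      have hφsurj : Function.Surjective φ := by
        intro x
        have hx : x ∈ φ.toRingHom.fieldRange := by
          have hle : Subfield.closure (insert η (K : Set F)) ≤ φ.toRingHom.fieldRange := by
            apply Subfield.closure_le.mpr
            intro y hy
            rcases hy with rfl | hy
            · exact ⟨RatFunc.X, hφX⟩
            · exact ⟨RatFunc.C ⟨y, hy⟩, hφC _⟩
          exact hle (by rw [hgen]; trivial)
        exact RingHom.mem_fieldRange.mp hx
      have hφinj : Function.Injective φ := φ.toRingHom.injective
      set e : RatFunc K ≃+* F := RingEquiv.ofBijective φ.toRingHom ⟨hφinj, hφsurj⟩ with he_def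
      set ψ : F →+* LaurentSeries K :=
        (@algebraMap (RatFunc K) (LaurentSeries K) _ _ (RatFunc.liftAlgebra K (LaurentSeries K))).comp e.symm.toRingHom with hψ_def
      have hψφ : ∀ x : RatFunc K, ψ (φ x) = (x : LaurentSeries K) := by
        intro x
        show (@algebraMap (RatFunc K) (LaurentSeries K) _ _ (RatFunc.liftAlgebra K (LaurentSeries K))) (e.symm (φ x)) = _
        rw [show φ x = e x from rfl, RingEquiv.symm_apply_apply]
      have hψK : ∀ a : K, ψ (a : F) = HahnSeries.single (0 : ℤ) a := by
        intro a
        rw [← hφC a, hψφ, ← RatFunc.algebraMap_C, ← IsScalarTower.algebraMap_apply]; simp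
      have hψη : ψ η = HahnSeries.single (1 : ℤ) 1 := by
        rw [← hφX, hψφ, RatFunc.coe_X]
      -- the set where ψ ∘ δ = DL ∘ ψ is a subfield containing K and η
      set D : LaurentSeries K → LaurentSeries K := RLaux.DL d hd0 p₀ with hD_def
      set S : Subfield F :=
        { carrier := {x | ψ (δ x) = D (ψ x)}
          zero_mem' := by
            show ψ (δ 0) = D (ψ 0)
            rw [RLaux.dzero hadd, map_zero, hD_def, RLaux.DL_zero]
          one_mem' := by
            show ψ (δ 1) = D (ψ 1)
            rw [RLaux.done' hmul, map_zero, map_one, hD_def, RLaux.DL_one hd1]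
          add_mem' := by
            intro x y hx hy
            show ψ (δ (x + y)) = D (ψ (x + y))
            rw [hadd, map_add, hx, hy, map_add, hD_def, RLaux.DL_add hdadd]
          mul_mem' := by
            intro x y hx hy
            show ψ (δ (x * y)) = D (ψ (x * y))
            rw [hmul, map_add, map_mul, map_mul, hx, hy, map_mul, hD_def,
              RLaux.DL_mul hdadd hdmul]
          neg_mem' := by
            intro x hx
            show ψ (δ (-x)) = D (ψ (-x))
            rw [RLaux.dneg hadd, map_neg, hx, map_neg, hD_def, RLaux.DL_neg hdadd]
          inv_mem' := by
            intro x hx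
            show ψ (δ x⁻¹) = D (ψ x⁻¹)
            by_cases hx0 : x = 0
            · subst hx0
              rw [inv_zero, RLaux.dzero hadd, map_zero, hD_def, RLaux.DL_zero]
            · have hψx0 : ψ x ≠ 0 := fun h => hx0 (ψ.injective (by rw [h, map_zero]))
              rw [RLaux.dinv hmul hx0, map_neg, map_mul, map_mul, map_inv₀, hx, hD_def,
                RLaux.DL_inv hdadd hdmul hd1 hψx0] } with hS_def
      have hψp : ψ p = HahnSeries.single (0 : ℤ) p₀ := hψK p₀
      have hψc : ψ c = HahnSeries.single (0 : ℤ) c₀ := hψK c₀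
      have hS : ∀ x : F, ψ (δ x) = D (ψ x) := by
        intro x
        have hle : Subfield.closure (insert η (K : Set F)) ≤ S := by
          apply Subfield.closure_le.mpr
          intro y hy
          rcases hy with rfl | hy
          · show ψ (δ y) = D (ψ y)
            rw [hδη, map_mul, hψp, hψη, hD_def, RLaux.DL_single,
              HahnSeries.single_mul_single, hd1]
            norm_num
          · show ψ (δ y) = D (ψ y)
            have hgoal : ψ (δ (((⟨y, hy⟩ : K) : K) : F)) = D (ψ (((⟨y, hy⟩ : K) : K) : F)) := by
              rw [show δ (((⟨y, hy⟩ : K) : K) : F) = ((d ⟨y, hy⟩ : K) : F) from rfl, hψK, hψK,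
                hD_def, RLaux.DL_single]
              norm_num
            exact hgoal
        have hmemT : x ∈ Subfield.closure (insert η (K : Set F)) := by rw [hgen]; trivial
        exact hle hmemT
      -- apply ψ to the equation and take the coefficient at 0
      have heq : ψ (δ (f * η⁻¹) + p * (f * η⁻¹)) = ψ c := by rw [hg]
      rw [map_add, map_mul, hS, hψp, hψc] at heq
      have h0 := congrArg (fun s : LaurentSeries K => s.coeff 0) heq
      simp only [HahnSeries.coeff_add, hD_def, RLaux.DL_coeff,
        HahnSeries.coeff_single_zero_mul, HahnSeries.coeff_single_same, zero_smul,
        zero_mul, add_zero] at h0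
      exact ⟨(ψ (f * η⁻¹)).coeff 0, h0⟩
  · rintro ⟨h, hh, hch⟩
    refine ⟨h * η, ?_⟩
    rw [hmul h η, hδη, hch]
    ring
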